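/- Let F be a finite set of points in R^d, listed in lexicographically increasing order as p_1, ..., p_n, and let y_k denote the componentwise minimum of p_1, ..., p_k. If for some index k+1 there exists a dimension j with p_{k+1}[j] < y_k[j], then p_{k+1} belongs to the Pareto frontier of F. -/
import Mathlib


/-- `p` dominates `q` if `p ≠ q` and `p i ≤ q i` in every coordinate. -/
def dominates {d : ℕ} (p q : Fin d → ℝ) : Prop :=
  p ≠ q ∧ ∀ i, p i ≤ q i

/-- Pareto frontier of a set `F`: points of `F` not dominated by any point of `F`. -/
def paretoFrontier {d : ℕ} (F : Set (Fin d → ℝ)) : Set (Fin d → ℝ) :=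
  {p ∈ F | ¬ ∃ q ∈ F, dominates q p}

/-- Lexicographic strict order on `ℝ^d`. -/
def lexLt {d : ℕ} (p q : Fin d → ℝ) : Prop :=
  ∃ i : Fin d, (∀ j, j < i → p j = q j) ∧ p i < q i

/-- Minkowski sum of two sets of points. -/
def minkSum {d : ℕ} (A B : Set (Fin d → ℝ)) : Set (Fin d → ℝ) :=
  {x | ∃ a ∈ A, ∃ b ∈ B, x = a + b}

/-- Correctness of the ParetoSubset selection: if, in a lexicographically sorted
list of points, point `p k` has some coordinate strictly below the componentwise
minimum of all earlier points, then `p k` is in the Pareto frontier. -/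
theorem paretoSubset_selected_in_frontier {d n : ℕ} (p : Fin n → Fin d → ℝ)
    (hsort : ∀ i j : Fin n, i < j → lexLt (p i) (p j))
    (k : Fin n)
    (h : ∃ j : Fin d, ∀ l : Fin n, l < k → p k j < p l j) :
    p k ∈ paretoFrontier (Set.range p) := by
  obtain ⟨j, hj⟩ := h
  refine ⟨⟨k, rfl⟩, ?_⟩
  rintro ⟨q, ⟨l, rfl⟩, hne, hle⟩
  rcases lt_trichotomy l k with hlt | heq | hgt
  · exact absurd (hle j) (not_le.mpr (hj l hlt))
  · exact hne (by rw [heq])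
  · obtain ⟨i, _, hi⟩ := hsort k l hgt
    exact absurd (hle i) (not_le.mpr hi)
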